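/- The sequence F_1 = C^T R^{-1} C, F_{k+1} = G(F_k) with G(F) = -Φ^T Q^{-1}(F + Q^{-1})^{-1} Q^{-1} Φ + Φ^T Q^{-1} Φ + C^T R^{-1} C is monotonically non-decreasing in the Loewner order: F_k ⪯ F_{k+1} for all k ≥ 1. -/

import Mathlib

open Matrix
open scoped MatrixOrder

/-- The Riccati-type map
`G(F) = -Φᵀ Q⁻¹ (F + Q⁻¹)⁻¹ Q⁻¹ Φ + Φᵀ Q⁻¹ Φ + Cᵀ R⁻¹ C`. -/
noncomputable def riccatiMap {n p : ℕ} (Φ Q : Matrix (Fin n) (Fin n) ℝ)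
    (C : Matrix (Fin p) (Fin n) ℝ) (R : Matrix (Fin p) (Fin p) ℝ)
    (F : Matrix (Fin n) (Fin n) ℝ) : Matrix (Fin n) (Fin n) ℝ :=
  -(Φᵀ * Q⁻¹ * (F + Q⁻¹)⁻¹ * Q⁻¹ * Φ) + Φᵀ * Q⁻¹ * Φ + Cᵀ * R⁻¹ * C

section Aux

variable {m : Type*} [Fintype m] [DecidableEq m]

/-- Real transpose-congruence preserves positive semidefiniteness. -/
lemma psd_conj {A : Matrix m m ℝ} (hA : A.PosSemidef) {k : Type*} [Fintype k]
    (B : Matrix m k ℝ) : (Bᵀ * A * B).PosSemidef := by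
  have := hA.conjTranspose_mul_mul_same B
  simpa [conjTranspose_eq_transpose_of_trivial] using this

lemma transpose_eq_self_of_psd {A : Matrix m m ℝ} (hA : A.PosSemidef) : Aᵀ = A := by
  have := hA.isHermitian
  rwa [IsHermitian, conjTranspose_eq_transpose_of_trivial] at this

/-- If `E` is PSD with unit determinant witness and `E ⪰ 1`, then `E⁻¹ ⪯ 1`. -/
lemma one_sub_inv_psd {E : Matrix m m ℝ} (hE : E.PosSemidef)
    (hdet : IsUnit E.det) (h1 : (E - 1).PosSemidef) : (1 - E⁻¹).PosSemidef := by
  set T := CFC.sqrt E with hT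
  have hTpsd : T.PosSemidef := Matrix.nonneg_iff_posSemidef.mp (CFC.sqrt_nonneg E)
  have hTT : T * T = E := CFC.sqrt_mul_sqrt_self E hE.nonneg
  have hTdet : IsUnit T.det := by
    have hd : T.det * T.det = E.det := by rw [← det_mul, hTT]
    refine isUnit_iff_ne_zero.mpr fun h => ?_
    rw [h, mul_zero] at hd
    exact isUnit_iff_ne_zero.mp hdet hd.symm
  have hti : T⁻¹ * T = 1 := nonsing_inv_mul T hTdet
  have hit : T * T⁻¹ = 1 := mul_nonsing_inv T hTdet
  have hTs : Tᵀ = T := transpose_eq_self_of_psd hTpsd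
  have hEinv : E⁻¹ = T⁻¹ * T⁻¹ := by rw [← hTT, Matrix.mul_inv_rev]
  have key : (T⁻¹)ᵀ * (E - 1) * T⁻¹ = 1 - E⁻¹ := by
    rw [transpose_nonsing_inv, hTs, mul_sub, sub_mul, mul_one, hEinv, ← hTT]
    simp only [← mul_assoc]
    rw [hti, one_mul, hit]
  have := psd_conj h1 T⁻¹
  rwa [key] at this

/-- Inversion is antitone on positive definite matrices. -/
lemma inv_antitone {A B : Matrix m m ℝ} (hA : A.PosDef) (hB : B.PosDef)
    (hAB : (B - A).PosSemidef) : (A⁻¹ - B⁻¹).PosSemidef := by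
  set S := CFC.sqrt A with hSdef
  have hSpsd : S.PosSemidef := Matrix.nonneg_iff_posSemidef.mp (CFC.sqrt_nonneg A)
  have hSS : S * S = A := CFC.sqrt_mul_sqrt_self A hA.posSemidef.nonneg
  have hSdet : IsUnit S.det := by
    have hd : S.det * S.det = A.det := by rw [← det_mul, hSS]
    refine isUnit_iff_ne_zero.mpr fun h => ?_
    rw [h, mul_zero] at hd
    exact hA.det_pos.ne' hd.symm
  have hsi : S⁻¹ * S = 1 := nonsing_inv_mul S hSdet
  have his : S * S⁻¹ = 1 := mul_nonsing_inv S hSdet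
  have hSs : Sᵀ = S := transpose_eq_self_of_psd hSpsd
  have hSis : (S⁻¹)ᵀ = S⁻¹ := by rw [transpose_nonsing_inv, hSs]
  set E := S⁻¹ * B * S⁻¹ with hEdef
  have hSAS : S⁻¹ * A * S⁻¹ = 1 := by
    rw [← hSS]
    simp only [← mul_assoc]
    rw [hsi, one_mul, his]
  have hEpsd : E.PosSemidef := by
    have := psd_conj hB.posSemidef S⁻¹
    rwa [hSis] at this
  have hSidet : IsUnit (S⁻¹).det := isUnit_nonsing_inv_det S hSdet
  have hEdet : IsUnit E.det := by
    rw [hEdef, det_mul, det_mul]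
    exact (hSidet.mul (isUnit_iff_ne_zero.mpr hB.det_pos.ne')).mul hSidet
  have hE1 : (E - 1).PosSemidef := by
    have := psd_conj hAB S⁻¹
    rwa [hSis, mul_sub, sub_mul, hSAS] at this
  have honeE : (1 - E⁻¹).PosSemidef := one_sub_inv_psd hEpsd hEdet hE1
  have hEinv : E⁻¹ = S * B⁻¹ * S := by
    rw [hEdef, Matrix.mul_inv_rev, Matrix.mul_inv_rev,
      nonsing_inv_nonsing_inv S hSdet, mul_assoc]
  have hAinv : S⁻¹ * S⁻¹ = A⁻¹ := by rw [← hSS, Matrix.mul_inv_rev]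
  have key : (S⁻¹)ᵀ * (1 - E⁻¹) * S⁻¹ = A⁻¹ - B⁻¹ := by
    rw [hSis, mul_sub, sub_mul, mul_one, hAinv, hEinv]
    congr 1
    simp only [← mul_assoc]
    rw [hsi, one_mul, mul_assoc, his, mul_one]
  have := psd_conj honeE S⁻¹
  rwa [key] at this

end Aux

section Riccati

variable {n p : ℕ} (Φ Q : Matrix (Fin n) (Fin n) ℝ) (C : Matrix (Fin p) (Fin n) ℝ)
  (R : Matrix (Fin p) (Fin p) ℝ)

lemma Qinv_transpose (hQ : Q.PosDef) : (Q⁻¹)ᵀ = Q⁻¹ :=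
  transpose_eq_self_of_psd hQ.inv.posSemidef

/-- The Riccati map is monotone in the Loewner order on PSD matrices. -/
lemma riccatiMap_monotone (hQ : Q.PosDef) {F F' : Matrix (Fin n) (Fin n) ℝ}
    (hF : F.PosSemidef) (hF' : F'.PosSemidef) (hle : (F' - F).PosSemidef) :
    (riccatiMap Φ Q C R F' - riccatiMap Φ Q C R F).PosSemidef := by
  have hQi : Q⁻¹.PosDef := hQ.inv
  have hA : (F + Q⁻¹).PosDef := Matrix.PosDef.posSemidef_add hF hQi
  have hB : (F' + Q⁻¹).PosDef := Matrix.PosDef.posSemidef_add hF' hQi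
  have hd : ((F + Q⁻¹)⁻¹ - (F' + Q⁻¹)⁻¹).PosSemidef := by
    apply inv_antitone hA hB
    simpa [add_sub_add_right_eq_sub] using hle
  have hconj := psd_conj hd (Q⁻¹ * Φ)
  have key : (Q⁻¹ * Φ)ᵀ * ((F + Q⁻¹)⁻¹ - (F' + Q⁻¹)⁻¹) * (Q⁻¹ * Φ)
      = riccatiMap Φ Q C R F' - riccatiMap Φ Q C R F := by
    rw [transpose_mul, Qinv_transpose Q hQ]
    simp only [riccatiMap]
    noncomm_ring
  rwa [key] at hconj

/-- `G(F) ⪰ Cᵀ R⁻¹ C` for PSD `F`. -/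
lemma riccatiMap_ge_base (hQ : Q.PosDef) {F : Matrix (Fin n) (Fin n) ℝ}
    (hF : F.PosSemidef) :
    (riccatiMap Φ Q C R F - Cᵀ * R⁻¹ * C).PosSemidef := by
  have hQi : Q⁻¹.PosDef := hQ.inv
  have hA : (F + Q⁻¹).PosDef := Matrix.PosDef.posSemidef_add hF hQi
  have hQdet : IsUnit Q.det := isUnit_iff_ne_zero.mpr hQ.det_pos.ne'
  have hd : (Q - (F + Q⁻¹)⁻¹).PosSemidef := by
    have := inv_antitone hQi hA (by simpa using hF)
    rwa [nonsing_inv_nonsing_inv Q hQdet] at this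
  have hconj := psd_conj hd (Q⁻¹ * Φ)
  have hQQ : Q⁻¹ * Q * Q⁻¹ = Q⁻¹ := by
    rw [nonsing_inv_mul Q hQdet, one_mul]
  have key : (Q⁻¹ * Φ)ᵀ * (Q - (F + Q⁻¹)⁻¹) * (Q⁻¹ * Φ)
      = riccatiMap Φ Q C R F - Cᵀ * R⁻¹ * C := by
    rw [transpose_mul, Qinv_transpose Q hQ]
    simp only [riccatiMap]
    have expand : Φᵀ * Q⁻¹ * (Q - (F + Q⁻¹)⁻¹) * (Q⁻¹ * Φ)
        = Φᵀ * (Q⁻¹ * Q * Q⁻¹) * Φ - Φᵀ * Q⁻¹ * (F + Q⁻¹)⁻¹ * Q⁻¹ * Φ := by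
      noncomm_ring
    rw [expand, hQQ]
    noncomm_ring
  rwa [key] at hconj

end Riccati

/-- The sequence `F₁ = Cᵀ R⁻¹ C`, `F_{k+1} = G(F_k)` is
monotonically non-decreasing in the Loewner order: `F_k ⪯ F_{k+1}` for all
`k ≥ 1`. -/
theorem riccati_iterates_monotone
    {n p : ℕ} (Φ Q : Matrix (Fin n) (Fin n) ℝ) (C : Matrix (Fin p) (Fin n) ℝ)
    (R : Matrix (Fin p) (Fin p) ℝ) (hQ : Q.PosDef) (hR : R.PosDef)
    (F : ℕ → Matrix (Fin n) (Fin n) ℝ)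
    (hF1 : F 1 = Cᵀ * R⁻¹ * C)
    (hFrec : ∀ k, 1 ≤ k → F (k + 1) = riccatiMap Φ Q C R (F k)) :
    ∀ k, 1 ≤ k → (F (k + 1) - F k).PosSemidef := by
  have base_psd : (Cᵀ * R⁻¹ * C).PosSemidef := psd_conj hR.inv.posSemidef C
  have main : ∀ k, 1 ≤ k → (F k).PosSemidef ∧ (F (k + 1) - F k).PosSemidef := by
    intro k hk
    induction k, hk using Nat.le_induction with
    | base =>
      have hF1psd : (F 1).PosSemidef := by rw [hF1]; exact base_psd
      refine ⟨hF1psd, ?_⟩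
      have := riccatiMap_ge_base Φ Q C R hQ hF1psd
      rw [← hF1, ← hFrec 1 le_rfl] at this
      exact this
    | succ k hk ih =>
      obtain ⟨hFk, hstep⟩ := ih
      have hFk1 : (F (k + 1)).PosSemidef := by
        have := hFk.add hstep
        simpa using this
      refine ⟨hFk1, ?_⟩
      have hmono := riccatiMap_monotone Φ Q C R hQ hFk hFk1 hstep
      rw [← hFrec k hk, ← hFrec (k + 1) (by omega)] at hmono
      exact hmono
  exact fun k hk => (main k hk).2
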